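/- (Comparison of mixed and Dirichlet solutions) Let f ∈ L²(Ω) with f ≥ 0. Let u ∈ E^s_{Σ1} be a weak solution of the mixed problem with right-hand side f satisfying u ≥ 0 a.e. in ℝ^N, and let ũ be the weak solution of the Dirichlet problem for (−Δ)^s with right-hand side f, i.e. ũ : ℝ^N → ℝ is measurable, ũ = 0 a.e. in ℝ^N \ Ω, ∬_{ℝ^N × ℝ^N} |ũ(x) − ũ(y)|² / |x − y|^{N+2s} dx dy < ∞, and (a_{N,s}/2) ∬_{ℝ^N × ℝ^N} (ũ(x) − ũ(y))(φ(x) − φ(y)) / |x − y|^{N+2s} dx dy = ∫_Ω f φ dx for every such test function φ vanishing a.e. outside Ω. Then u ≥ ũ a.e. in ℝ^N. -/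

import Mathlib

open MeasureTheory Set

noncomputable section

/-- Euclidean space ℝ^N. -/
abbrev Rn (N : ℕ) := EuclideanSpace ℝ (Fin N)

/-- The set Q := ℝ^{2N} \ ((ℝ^N \ Ω) × (ℝ^N \ Ω)). -/
def Qset (N : ℕ) (Ω : Set (Rn N)) : Set (Rn N × Rn N) :=
  Set.univ \ (Ωᶜ ×ˢ Ωᶜ)

/-- The kernel (u(x)-u(y))(v(x)-v(y))/|x-y|^{N+2s}. -/
def frKer (N : ℕ) (s : ℝ) (u v : Rn N → ℝ) (p : Rn N × Rn N) : ℝ :=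
  (u p.1 - u p.2) * (v p.1 - v p.2) / ‖p.1 - p.2‖ ^ ((N : ℝ) + 2 * s)

/-- Membership in the space E^s_{Σ₁}: measurable, vanishing a.e. on Σ₁,
with finite L²(Ω) norm and finite Gagliardo seminorm over Q. -/
def MemE (N : ℕ) (s : ℝ) (Ω S1 : Set (Rn N)) (u : Rn N → ℝ) : Prop :=
  Measurable u ∧ (∀ᵐ x : Rn N, x ∈ S1 → u x = 0) ∧
  IntegrableOn (fun x => (u x) ^ 2) Ω ∧
  IntegrableOn (frKer N s u u) (Qset N Ω)

/-- Weak solution of the mixed problem (-Δ)^s u = f in Ω, u = 0 in Σ₁, 𝒩_s u = 0 in Σ₂. -/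
def IsWeakSolMixed (N : ℕ) (s aNs : ℝ) (Ω S1 : Set (Rn N)) (f u : Rn N → ℝ) : Prop :=
  MemE N s Ω S1 u ∧ ∀ φ : Rn N → ℝ, MemE N s Ω S1 φ →
    (aNs / 2) * ∫ p in Qset N Ω, frKer N s u φ p = ∫ x in Ω, f x * φ x

/-- Membership in the space H^s_0(Ω) of the Dirichlet problem: measurable, vanishing
a.e. outside Ω, with finite Gagliardo seminorm over all of ℝ^N × ℝ^N. -/
def MemD (N : ℕ) (s : ℝ) (Ω : Set (Rn N)) (u : Rn N → ℝ) : Prop :=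
  Measurable u ∧ (∀ᵐ x : Rn N, x ∉ Ω → u x = 0) ∧
  MeasureTheory.Integrable (frKer N s u u)

lemma div_le_div_nonneg_denom {a b k : ℝ} (h : a ≤ b) (hk : 0 ≤ k) : a / k ≤ b / k := by
  rcases hk.eq_or_lt with h0 | h0
  · simp [← h0]
  · exact (div_le_div_iff_of_pos_right h0).mpr h

lemma posPart_key (a b : ℝ) :
    (max a 0 - max b 0) * (max a 0 - max b 0) ≤ (a - b) * (max a 0 - max b 0) := by
  rcases le_total a 0 with ha | ha <;> rcases le_total b 0 with hb | hb <;>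
    simp [max_eq_left, max_eq_right, ha, hb] <;> nlinarith

lemma frKer_measurable {N : ℕ} {s : ℝ} {u v : Rn N → ℝ}
    (hu : Measurable u) (hv : Measurable v) : Measurable (frKer N s u v) := by
  unfold frKer
  exact (((hu.comp measurable_fst).sub (hu.comp measurable_snd)).mul
      ((hv.comp measurable_fst).sub (hv.comp measurable_snd))).div
    ((measurable_fst.sub measurable_snd).norm.pow measurable_const)

lemma frKer_self_nonneg {N : ℕ} {s : ℝ} (u : Rn N → ℝ) (p : Rn N × Rn N) :
    0 ≤ frKer N s u u p :=
  div_nonneg (mul_self_nonneg _) (Real.rpow_nonneg (norm_nonneg _) _)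

lemma abs_frKer_le {N : ℕ} {s : ℝ} (u v : Rn N → ℝ) (p : Rn N × Rn N) :
    |frKer N s u v p| ≤ frKer N s u u p + frKer N s v v p := by
  unfold frKer
  set k := ‖p.1 - p.2‖ ^ ((N : ℝ) + 2 * s) with hk
  have hk0 : 0 ≤ k := Real.rpow_nonneg (norm_nonneg _) _
  rw [abs_div, abs_of_nonneg hk0, ← add_div]
  refine div_le_div_nonneg_denom ?_ hk0
  set a := u p.1 - u p.2; set b := v p.1 - v p.2
  have := abs_mul a b
  nlinarith [sq_nonneg (|a| - |b|), sq_abs a, sq_abs b, abs_nonneg a, abs_nonneg b]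

lemma frKer_pos_bound {N : ℕ} {s : ℝ} (u v : Rn N → ℝ) (p : Rn N × Rn N) :
    frKer N s (fun x => max (v x - u x) 0) (fun x => max (v x - u x) 0) p ≤
      2 * frKer N s v v p + 2 * frKer N s u u p := by
  unfold frKer
  set k := ‖p.1 - p.2‖ ^ ((N : ℝ) + 2 * s) with hk
  have hk0 : 0 ≤ k := Real.rpow_nonneg (norm_nonneg _) _
  have : 2 * ((v p.1 - v p.2) * (v p.1 - v p.2) / k) + 2 * ((u p.1 - u p.2) * (u p.1 - u p.2) / k)
      = (2 * ((v p.1 - v p.2) * (v p.1 - v p.2)) + 2 * ((u p.1 - u p.2) * (u p.1 - u p.2))) / k := by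
    ring
  simp only []
  rw [this]
  refine div_le_div_nonneg_denom ?_ hk0
  have h1 : |max (v p.1 - u p.1) 0 - max (v p.2 - u p.2) 0| ≤
      |(v p.1 - u p.1) - (v p.2 - u p.2)| := abs_max_sub_max_le_abs _ _ _
  have h2 : (max (v p.1 - u p.1) 0 - max (v p.2 - u p.2) 0) *
      (max (v p.1 - u p.1) 0 - max (v p.2 - u p.2) 0) ≤
      ((v p.1 - u p.1) - (v p.2 - u p.2)) * ((v p.1 - u p.1) - (v p.2 - u p.2)) := by
    rw [← abs_mul_abs_self, ← abs_mul_abs_self ((v p.1 - u p.1) - (v p.2 - u p.2))]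
    exact mul_le_mul h1 h1 (abs_nonneg _) (abs_nonneg _)
  nlinarith [sq_nonneg ((v p.1 - v p.2) + (u p.1 - u p.2)),
    sq_nonneg ((v p.1 - v p.2) - (u p.1 - u p.2))]

lemma frKer_key_ineq {N : ℕ} {s : ℝ} (u v : Rn N → ℝ) (p : Rn N × Rn N) :
    frKer N s (fun x => max (v x - u x) 0) (fun x => max (v x - u x) 0) p ≤
      frKer N s (fun x => v x - u x) (fun x => max (v x - u x) 0) p := by
  unfold frKer
  exact div_le_div_nonneg_denom (posPart_key _ _) (Real.rpow_nonneg (norm_nonneg _) _)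

lemma frKer_sub {N : ℕ} {s : ℝ} (u v w : Rn N → ℝ) (p : Rn N × Rn N) :
    frKer N s (fun x => v x - u x) w p = frKer N s v w p - frKer N s u w p := by
  unfold frKer
  rw [div_sub_div_same]
  ring_nf

lemma sq_integrableOn {N : ℕ} (hN : 1 ≤ N) {s : ℝ} (hs0 : 0 < s) {Ω : Set (Rn N)}
    (hΩm : MeasurableSet Ω) (hΩb : Bornology.IsBounded Ω)
    {v : Rn N → ℝ} (hvm : Measurable v) (hv0 : ∀ᵐ x : Rn N, x ∉ Ω → v x = 0)
    (hint : Integrable (frKer N s v v)) :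
    IntegrableOn (fun x => v x ^ 2) Ω := by
  have hp : (0:ℝ) < (N:ℝ) + 2 * s := by positivity
  obtain ⟨r, hr⟩ := hΩb.subset_ball 0
  set R := max r 1 with hR
  have hR1 : (1:ℝ) ≤ R := le_max_right _ _
  have hΩR : Ω ⊆ Metric.ball 0 R :=
    hr.trans (Metric.ball_subset_ball (le_max_left _ _))
  set Y := Metric.ball (0 : Rn N) (R+1) \ Metric.closedBall 0 R with hY
  have hYo : IsOpen Y := Metric.isOpen_ball.sdiff Metric.isClosed_closedBall
  have hYm : MeasurableSet Y := hYo.measurableSet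
  have hYne : Y.Nonempty := by
    have hxnorm : ‖EuclideanSpace.single (⟨0, hN⟩ : Fin N) (R + 1/2)‖ = R + 1/2 := by
      rw [EuclideanSpace.norm_single, Real.norm_eq_abs, abs_of_nonneg (by linarith)]
    refine ⟨EuclideanSpace.single (⟨0, hN⟩ : Fin N) (R + 1/2), ?_, ?_⟩
    · rw [Metric.mem_ball, dist_zero_right, hxnorm]; linarith
    · intro h
      rw [Metric.mem_closedBall, dist_zero_right, hxnorm] at h
      linarith
  have hYpos : 0 < volume Y := hYo.measure_pos _ hYne
  have hYfin : volume Y < ⊤ :=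
    lt_of_le_of_lt (measure_mono (diff_subset.trans Metric.ball_subset_closedBall))
      (MeasureTheory.measure_closedBall_lt_top)
  set D := 2*R + 1 with hD
  set Dp := D ^ ((N:ℝ) + 2*s) with hDp
  have hDppos : 0 < Dp := Real.rpow_pos_of_pos (by linarith) _
  set μΩ := volume.restrict Ω
  set νY := volume.restrict Y
  -- a.e. facts on the product
  have hfst : ∀ᵐ p : Rn N × Rn N ∂μΩ.prod νY, p.1 ∈ Ω :=
    (Measure.quasiMeasurePreserving_fst).ae (ae_restrict_mem hΩm)
  have hYnΩ : ∀ y ∈ Y, y ∉ Ω := fun y hy hyΩ =>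
    hy.2 (Metric.ball_subset_closedBall (hΩR hyΩ))
  have hsnd : ∀ᵐ p : Rn N × Rn N ∂μΩ.prod νY, p.2 ∈ Y ∧ v p.2 = 0 := by
    refine (Measure.quasiMeasurePreserving_snd (μ := μΩ) (ν := νY)).ae (p := fun y => y ∈ Y ∧ v y = 0) ?_
    filter_upwards [ae_restrict_mem hYm, ae_restrict_of_ae hv0] with y hy hv
    exact ⟨hy, hv (hYnΩ y hy)⟩
  have hbound : ∀ᵐ p : Rn N × Rn N ∂μΩ.prod νY,
      ENNReal.ofReal (Dp⁻¹ * v p.1 ^ 2) ≤ ENNReal.ofReal (frKer N s v v p) := by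
    filter_upwards [hfst, hsnd] with p hp1 hp2
    apply ENNReal.ofReal_le_ofReal
    have h1 : ‖p.1‖ < R := by simpa [mem_ball_iff_norm] using hΩR hp1
    have h2 : R < ‖p.2‖ := by
      have := hp2.1.2; simp [Metric.mem_closedBall, dist_zero_right] at this; linarith
    have hne : p.1 - p.2 ≠ 0 := by
      intro h; rw [sub_eq_zero] at h; rw [h] at h1; linarith
    have hkpos : 0 < ‖p.1 - p.2‖ := norm_pos_iff.mpr hne
    have hkD : ‖p.1 - p.2‖ ≤ D := by
      have := norm_sub_le p.1 p.2
      have h3 : ‖p.2‖ < R + 1 := by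
        have := hp2.1.1; simpa [mem_ball_iff_norm] using this
      linarith
    have hkpow : 0 < ‖p.1 - p.2‖ ^ ((N:ℝ) + 2*s) := Real.rpow_pos_of_pos hkpos _
    have hkpowD : ‖p.1 - p.2‖ ^ ((N:ℝ) + 2*s) ≤ Dp :=
      Real.rpow_le_rpow (norm_nonneg _) hkD hp.le
    have : frKer N s v v p = v p.1 * v p.1 / ‖p.1 - p.2‖ ^ ((N:ℝ) + 2*s) := by
      unfold frKer; rw [hp2.2]; ring_nf
    rw [this, inv_mul_eq_div]
    calc v p.1 ^ 2 / Dp ≤ v p.1 ^ 2 / ‖p.1 - p.2‖ ^ ((N:ℝ) + 2*s) :=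
          div_le_div_of_nonneg_left (sq_nonneg _) hkpow hkpowD
      _ = v p.1 * v p.1 / ‖p.1 - p.2‖ ^ ((N:ℝ) + 2*s) := by rw [sq]
  -- lintegral comparison
  set I := ∫⁻ x, ENNReal.ofReal (v x ^ 2) ∂μΩ with hI
  have hfmeas : Measurable fun x => ENNReal.ofReal (Dp⁻¹ * v x ^ 2) :=
    (measurable_const.mul (hvm.pow_const 2)).ennreal_ofReal
  have hLHS : ∫⁻ p, ENNReal.ofReal (Dp⁻¹ * v p.1 ^ 2) ∂μΩ.prod νY
      = ENNReal.ofReal Dp⁻¹ * I * volume Y := by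
    have := MeasureTheory.lintegral_prod_mul (μ := μΩ) (ν := νY)
      (f := fun x => ENNReal.ofReal (Dp⁻¹ * v x ^ 2)) (g := fun _ => 1)
      hfmeas.aemeasurable aemeasurable_const
    simp only [mul_one] at this
    rw [this, lintegral_one, Measure.restrict_apply_univ]
    congr 1
    rw [← lintegral_const_mul _ ((hvm.pow_const 2).ennreal_ofReal)]
    refine lintegral_congr fun x => ?_
    rw [ENNReal.ofReal_mul (by positivity)]
  have hRHS : ∫⁻ p, ENNReal.ofReal (frKer N s v v p) ∂μΩ.prod νY ≠ ⊤ := by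
    have h1 : μΩ.prod νY = (volume : Measure (Rn N × Rn N)).restrict (Ω ×ˢ Y) := by
      rw [Measure.prod_restrict, ← Measure.volume_eq_prod]
    rw [h1]
    refine ne_top_of_le_ne_top ?_ (setLIntegral_le_lintegral _ _)
    have : ∫⁻ p, ENNReal.ofReal (frKer N s v v p) = ∫⁻ p, ‖frKer N s v v p‖₊ := by
      refine lintegral_congr fun p => ?_
      rw [← enorm_eq_nnnorm, Real.enorm_eq_ofReal (frKer_self_nonneg v p)]
    rw [this]
    exact hint.2.ne
  have hkey : ENNReal.ofReal Dp⁻¹ * I * volume Y ≠ ⊤ := by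
    rw [← hLHS]
    exact ne_top_of_le_ne_top hRHS (lintegral_mono_ae hbound)
  have hIne : I ≠ ⊤ := by
    intro h
    rw [h, ENNReal.mul_top ((ENNReal.ofReal_pos.mpr (inv_pos.mpr hDppos)).ne'),
      ENNReal.top_mul hYpos.ne'] at hkey
    exact hkey rfl
  refine ⟨((hvm.pow_const 2).aestronglyMeasurable), ?_⟩
  rw [MeasureTheory.hasFiniteIntegral_iff_norm]
  have : ∫⁻ x, ENNReal.ofReal ‖v x ^ 2‖ ∂μΩ = I := by
    refine lintegral_congr fun x => ?_
    rw [Real.norm_eq_abs, abs_of_nonneg (sq_nonneg _)]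
  rw [this]
  exact hIne.lt_top

lemma ae_notQ_zero {N : ℕ} {Ω : Set (Rn N)} (hΩm : MeasurableSet Ω) {g : Rn N → ℝ}
    (hg : Measurable g) (h : ∀ᵐ x : Rn N, x ∉ Ω → g x = 0) :
    ∀ᵐ p : Rn N × Rn N, p ∉ Qset N Ω → (g p.1 = 0 ∧ g p.2 = 0) := by
  set T := Ωᶜ ∩ {x : Rn N | g x ≠ 0} with hT
  have hTm : MeasurableSet T :=
    hΩm.compl.inter ((hg (measurableSet_singleton 0)).compl)
  have hT0 : volume T = 0 := by
    rw [ae_iff] at h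
    refine measure_mono_null (fun x hx => ?_) h
    simp only [mem_setOf_eq, _root_.not_imp]
    exact ⟨hx.1, hx.2⟩
  rw [ae_iff]
  refine measure_mono_null (t := (T ×ˢ (univ : Set (Rn N))) ∪ ((univ : Set (Rn N)) ×ˢ T))
    (fun p hp => ?_) ?_
  · simp only [mem_setOf_eq, _root_.not_imp] at hp
    obtain ⟨hnq, hng⟩ := hp
    have hmem : p.1 ∉ Ω ∧ p.2 ∉ Ω := by
      simp only [Qset, mem_diff, mem_univ, true_and, not_not, mem_prod, mem_compl_iff] at hnq
      exact hnq
    rcases not_and_or.mp hng with h1 | h2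
    · exact Or.inl ⟨⟨hmem.1, h1⟩, mem_univ _⟩
    · exact Or.inr ⟨mem_univ _, hmem.2, h2⟩
  · refine measure_union_null ?_ ?_ <;>
      rw [Measure.volume_eq_prod, Measure.prod_prod]
    · rw [hT0, zero_mul]
    · rw [hT0, mul_zero]

lemma ae_zero_on_of_frKer_null {N : ℕ} (hN : 1 ≤ N) {s : ℝ} (hs0 : 0 < s) {Ω : Set (Rn N)}
    (hΩm : MeasurableSet Ω) (hΩb : Bornology.IsBounded Ω) {w : Rn N → ℝ} (hwm : Measurable w)
    (hwout : ∀ᵐ x : Rn N, x ∉ Ω → w x = 0)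
    (haeQ : ∀ᵐ p : Rn N × Rn N, p ∈ Qset N Ω → frKer N s w w p = 0) :
    ∀ᵐ x : Rn N, x ∈ Ω → w x = 0 := by
  obtain ⟨r, hr⟩ := hΩb.subset_ball 0
  set R := max r 1 with hR
  have hR1 : (1:ℝ) ≤ R := le_max_right _ _
  have hΩR : Ω ⊆ Metric.ball 0 R :=
    hr.trans (Metric.ball_subset_ball (le_max_left _ _))
  set Y := Metric.ball (0 : Rn N) (R+1) \ Metric.closedBall 0 R with hY
  have hYo : IsOpen Y := Metric.isOpen_ball.sdiff Metric.isClosed_closedBall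
  have hYm : MeasurableSet Y := hYo.measurableSet
  have hYne : Y.Nonempty := by
    have hxnorm : ‖EuclideanSpace.single (⟨0, hN⟩ : Fin N) (R + 1/2)‖ = R + 1/2 := by
      rw [EuclideanSpace.norm_single, Real.norm_eq_abs, abs_of_nonneg (by linarith)]
    refine ⟨EuclideanSpace.single (⟨0, hN⟩ : Fin N) (R + 1/2), ?_, ?_⟩
    · rw [Metric.mem_ball, dist_zero_right, hxnorm]; linarith
    · intro h
      rw [Metric.mem_closedBall, dist_zero_right, hxnorm] at h
      linarith
  have hYpos : 0 < volume Y := hYo.measure_pos _ hYne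
  set μΩ := volume.restrict Ω with hμΩ
  set νY := volume.restrict Y with hνY
  have hprodeq : μΩ.prod νY = (volume : Measure (Rn N × Rn N)).restrict (Ω ×ˢ Y) := by
    rw [Measure.prod_restrict, ← Measure.volume_eq_prod]
  have h1 : ∀ᵐ p : Rn N × Rn N ∂μΩ.prod νY, p ∈ Qset N Ω → frKer N s w w p = 0 := by
    rw [hprodeq]; exact ae_restrict_of_ae haeQ
  have hfst : ∀ᵐ p : Rn N × Rn N ∂μΩ.prod νY, p.1 ∈ Ω :=
    (Measure.quasiMeasurePreserving_fst).ae (ae_restrict_mem hΩm)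
  have hYnΩ : ∀ y ∈ Y, y ∉ Ω := fun y hy hyΩ =>
    hy.2 (Metric.ball_subset_closedBall (hΩR hyΩ))
  have hsnd : ∀ᵐ p : Rn N × Rn N ∂μΩ.prod νY, p.2 ∈ Y ∧ w p.2 = 0 := by
    refine (Measure.quasiMeasurePreserving_snd (μ := μΩ) (ν := νY)).ae
      (p := fun y => y ∈ Y ∧ w y = 0) ?_
    filter_upwards [ae_restrict_mem hYm, ae_restrict_of_ae hwout] with y hy hw
    exact ⟨hy, hw (hYnΩ y hy)⟩
  have hkey : ∀ᵐ p : Rn N × Rn N ∂μΩ.prod νY, w p.1 = 0 := by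
    filter_upwards [h1, hfst, hsnd] with p hq hp1 hp2
    have hpQ : p ∈ Qset N Ω := by
      simp only [Qset, mem_diff, mem_univ, true_and, mem_prod, mem_compl_iff]
      intro hc; exact hc.1 hp1
    have h0 := hq hpQ
    have hn1 : ‖p.1‖ < R := by simpa [mem_ball_iff_norm] using hΩR hp1
    have hn2 : R < ‖p.2‖ := by
      have := hp2.1.2; simp [Metric.mem_closedBall, dist_zero_right] at this; linarith
    have hne : p.1 - p.2 ≠ 0 := by
      intro h; rw [sub_eq_zero] at h; rw [h] at hn1; linarith
    have hkpos : (0:ℝ) < ‖p.1 - p.2‖ ^ ((N:ℝ) + 2*s) :=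
      Real.rpow_pos_of_pos (norm_pos_iff.mpr hne) _
    unfold frKer at h0
    rw [div_eq_zero_iff] at h0
    rcases h0 with h0 | h0
    · have : w p.1 - w p.2 = 0 := by
        rcases mul_eq_zero.mp h0 with h | h <;> exact h
      rw [hp2.2] at this; linarith [this]
    · exact absurd h0 hkpos.ne'
  have hmain := Measure.ae_ae_of_ae_prod hkey
  have hνne : νY ≠ 0 := by
    intro h
    have : volume Y = 0 := by
      have := congrArg (fun m : Measure (Rn N) => m univ) h
      simpa [hνY, Measure.restrict_apply_univ] using this
    exact hYpos.ne' this
  haveI : (ae νY).NeBot := ae_neBot.mpr hνne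
  have hfin : ∀ᵐ x ∂μΩ, w x = 0 := by
    filter_upwards [hmain] with x hx
    obtain ⟨y, hy⟩ := hx.exists
    exact hy
  exact (ae_restrict_iff' hΩm).mp hfin

/-- Comparison between the solution of the mixed problem and the solution of the
Dirichlet problem with the same nonnegative right-hand side f: u ≥ ũ a.e. -/
theorem mixed_dominates_dirichlet
    {N : ℕ} (hN : 1 ≤ N) {s aNs : ℝ} (hs0 : 0 < s) (hs1 : s < 1) (haNs : 0 < aNs)
    {Ω S1 S2 : Set (Rn N)} (hΩo : IsOpen Ω) (hΩb : Bornology.IsBounded Ω)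
    (hΩc : IsConnected Ω)
    (hS1o : IsOpen S1) (hS2o : IsOpen S2)
    (hS1m : 0 < volume S1) (hS2m : 0 < volume S2)
    (hdisj : Disjoint S1 S2) (hcov : closure S1 ∪ closure S2 = Ωᶜ)
    (f : Rn N → ℝ) (hf_meas : Measurable f) (hfL2 : MemLp f 2 (volume.restrict Ω))
    (hf_nonneg : ∀ᵐ x ∂(volume.restrict Ω), 0 ≤ f x)
    (u : Rn N → ℝ) (hu : IsWeakSolMixed N s aNs Ω S1 f u)
    (hu_nonneg : ∀ᵐ x : Rn N, 0 ≤ u x)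
    (v : Rn N → ℝ) (hvD : MemD N s Ω v)
    (hv : ∀ φ : Rn N → ℝ, MemD N s Ω φ →
      (aNs / 2) * ∫ p : Rn N × Rn N, frKer N s v φ p = ∫ x in Ω, f x * φ x) :
    ∀ᵐ x : Rn N, v x ≤ u x := by
  classical
  obtain ⟨⟨hum, huS1, huL2, huQ⟩, huEq⟩ := hu
  obtain ⟨hvm, hvout, hvInt⟩ := hvD
  have hΩm : MeasurableSet Ω := hΩo.measurableSet
  have hQm : MeasurableSet (Qset N Ω) :=
    MeasurableSet.univ.diff (hΩm.compl.prod hΩm.compl)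
  set w : Rn N → ℝ := fun x => max (v x - u x) 0 with hwdef
  have hwm : Measurable w := (hvm.sub hum).max measurable_const
  have hwout : ∀ᵐ x : Rn N, x ∉ Ω → w x = 0 := by
    filter_upwards [hvout, hu_nonneg] with x h1 h2 hx
    have : v x - u x ≤ 0 := by rw [h1 hx]; linarith
    exact max_eq_right this
  have hvL2 : IntegrableOn (fun x => v x ^ 2) Ω :=
    sq_integrableOn hN hs0 hΩm hΩb hvm hvout hvInt
  have hwL2 : IntegrableOn (fun x => w x ^ 2) Ω := by
    refine Integrable.mono' ((hvL2.const_mul 2).add (huL2.const_mul 2))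
      ((hwm.pow_const 2).aestronglyMeasurable) (ae_of_all _ fun x => ?_)
    rw [Real.norm_eq_abs, abs_of_nonneg (sq_nonneg _)]
    have h1 : |w x| ≤ |v x - u x| := by
      have := abs_max_sub_max_le_abs (v x - u x) 0 0
      simpa using this
    have h2 : w x ^ 2 ≤ (v x - u x) ^ 2 := by
      rw [← sq_abs (w x), ← sq_abs (v x - u x)]
      exact pow_le_pow_left₀ (abs_nonneg _) h1 2
    simp only [Pi.add_apply]
    nlinarith [sq_nonneg (v x + u x)]
  have hwwm : Measurable (frKer N s w w) := frKer_measurable hwm hwm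
  have hQbound : IntegrableOn (fun p => 2 * frKer N s v v p + 2 * frKer N s u u p)
      (Qset N Ω) := ((hvInt.integrableOn).const_mul 2).add (huQ.const_mul 2)
  have hwQInt : IntegrableOn (frKer N s w w) (Qset N Ω) := by
    refine Integrable.mono' hQbound hwwm.aestronglyMeasurable (ae_of_all _ fun p => ?_)
    rw [Real.norm_eq_abs, abs_of_nonneg (frKer_self_nonneg w p)]
    exact frKer_pos_bound u v p
  have hnotQ_w : ∀ᵐ p : Rn N × Rn N, p ∉ Qset N Ω → (w p.1 = 0 ∧ w p.2 = 0) :=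
    ae_notQ_zero hΩm hwm hwout
  have hnotQ_v : ∀ᵐ p : Rn N × Rn N, p ∉ Qset N Ω → (v p.1 = 0 ∧ v p.2 = 0) :=
    ae_notQ_zero hΩm hvm hvout
  have hwGInt : Integrable (frKer N s w w) := by
    have hBInt : Integrable (fun p => 2 * frKer N s v v p +
        (Qset N Ω).indicator (fun q => 2 * frKer N s u u q) p) :=
      (hvInt.const_mul 2).add ((integrable_indicator_iff hQm).mpr (huQ.const_mul 2))
    refine Integrable.mono' hBInt hwwm.aestronglyMeasurable ?_
    filter_upwards [hnotQ_w] with p hp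
    rw [Real.norm_eq_abs, abs_of_nonneg (frKer_self_nonneg w p)]
    by_cases hq : p ∈ Qset N Ω
    · rw [indicator_of_mem hq]
      exact frKer_pos_bound u v p
    · have h0 : frKer N s w w p = 0 := by
        obtain ⟨h1, h2⟩ := hp hq
        unfold frKer; rw [h1, h2]; simp
      rw [h0, indicator_of_notMem hq, add_zero]
      have := frKer_self_nonneg (N := N) (s := s) v p; linarith
  have hS1sub : S1 ⊆ Ωᶜ := subset_closure.trans (hcov ▸ subset_union_left)
  have hwS1 : ∀ᵐ x : Rn N, x ∈ S1 → w x = 0 := by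
    filter_upwards [hwout] with x h hx; exact h (hS1sub hx)
  have hEq1 := huEq w ⟨hwm, hwS1, hwL2, hwQInt⟩
  have hEq2 := hv w ⟨hwm, hwout, hwGInt⟩
  have hvwm : Measurable (frKer N s v w) := frKer_measurable hvm hwm
  have huwm : Measurable (frKer N s u w) := frKer_measurable hum hwm
  have hvwG : Integrable (frKer N s v w) := by
    refine Integrable.mono' (hvInt.add hwGInt) hvwm.aestronglyMeasurable
      (ae_of_all _ fun p => ?_)
    rw [Real.norm_eq_abs]; exact abs_frKer_le v w p
  have huwQ : IntegrableOn (frKer N s u w) (Qset N Ω) := by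
    refine Integrable.mono' (huQ.add hwQInt) huwm.aestronglyMeasurable
      (ae_of_all _ fun p => ?_)
    rw [Real.norm_eq_abs]; exact abs_frKer_le u w p
  have hvwQ : IntegrableOn (frKer N s v w) (Qset N Ω) := hvwG.integrableOn
  have hE1 : ∫ p in Qset N Ω, frKer N s v w p = ∫ p : Rn N × Rn N, frKer N s v w p := by
    refine setIntegral_eq_integral_of_ae_compl_eq_zero ?_
    filter_upwards [hnotQ_v] with p hp hpq
    obtain ⟨h1, h2⟩ := hp hpq
    unfold frKer; rw [h1, h2]; simp
  have hEqQ : ∫ p in Qset N Ω, frKer N s v w p = ∫ p in Qset N Ω, frKer N s u w p := by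
    have h2 : (aNs / 2) * ∫ p in Qset N Ω, frKer N s v w p
        = (aNs / 2) * ∫ p in Qset N Ω, frKer N s u w p := by
      rw [hE1, hEq2, hEq1]
    exact mul_left_cancel₀ (by positivity) h2
  have hle : ∫ p in Qset N Ω, frKer N s w w p
      ≤ ∫ p in Qset N Ω, (frKer N s v w p - frKer N s u w p) := by
    refine integral_mono_ae hwQInt (hvwQ.sub huwQ) (ae_of_all _ fun p => ?_)
    show frKer N s w w p ≤ frKer N s v w p - frKer N s u w p
    rw [← frKer_sub]
    exact frKer_key_ineq u v p
  have hge : 0 ≤ ∫ p in Qset N Ω, frKer N s w w p :=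
    integral_nonneg fun p => frKer_self_nonneg w p
  have hsub : (∫ p in Qset N Ω, frKer N s v w p) - ∫ p in Qset N Ω, frKer N s u w p = 0 :=
    sub_eq_zero.mpr hEqQ
  have hZero : ∫ p in Qset N Ω, frKer N s w w p = 0 := by
    rw [integral_sub hvwQ huwQ] at hle
    linarith
  have hae0 := (integral_eq_zero_iff_of_nonneg_ae
    (ae_of_all _ fun p => frKer_self_nonneg w p) hwQInt).mp hZero
  have haeQ : ∀ᵐ p : Rn N × Rn N, p ∈ Qset N Ω → frKer N s w w p = 0 := by
    refine (ae_restrict_iff' hQm).mp ?_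
    filter_upwards [hae0] with p hp
    exact hp
  have hΩ0 : ∀ᵐ x : Rn N, x ∈ Ω → w x = 0 :=
    ae_zero_on_of_frKer_null hN hs0 hΩm hΩb hwm hwout haeQ
  filter_upwards [hΩ0, hwout] with x h1 h2
  have hw0 : w x = 0 := by
    by_cases hx : x ∈ Ω
    · exact h1 hx
    · exact h2 hx
  have hle2 : v x - u x ≤ w x := le_max_left _ _
  rw [hw0] at hle2
  linarith
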